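/- Let H be a Hilbert space, J ∈ B(H) skew-adjoint, R ∈ B(H) self-adjoint nonnegative, and m ∈ ℕ. Then there exists κ > 0 such that ∑_{j=0}^{m} J^j R (J*)^j ≥ κ·I if and only if the (algebraic, not necessarily closed) span of the union over j = 0,…,m of the ranges of J^j ∘ √R equals H. -/

import Mathlib

open ContinuousLinearMap
open scoped InnerProductSpace

private lemma re_inner_self {H : Type*} [NormedAddCommGroup H] [InnerProductSpace ℂ H]
    (z : H) : (⟪z, z⟫_ℂ).re = ‖z‖ ^ 2 := by
  rw [inner_self_eq_norm_sq_to_K]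
  simp [← Complex.ofReal_pow]

/-- Quadratic form of the sum equals the sum of squared norms. -/
lemma key_quadform
    {H : Type*} [NormedAddCommGroup H] [InnerProductSpace ℂ H]
    [CompleteSpace H]
    (J R S : H →L[ℂ] H)
    (hS : S.IsPositive) (hS2 : S * S = R)
    (m : ℕ) (x : H) :
    (⟪(∑ j ∈ Finset.range (m + 1),
        (J ^ j) * R * (ContinuousLinearMap.adjoint J) ^ j) x, x⟫_ℂ).re
      = ∑ j ∈ Finset.range (m + 1),
          ‖S (((ContinuousLinearMap.adjoint J) ^ j) x)‖ ^ 2 := by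
  have hSsa : ContinuousLinearMap.adjoint S = S := hS.isSelfAdjoint.adjoint_eq
  rw [ContinuousLinearMap.sum_apply, sum_inner, Complex.re_sum]
  refine Finset.sum_congr rfl fun j _ => ?_
  have hpow : ContinuousLinearMap.adjoint (J ^ j) = (ContinuousLinearMap.adjoint J) ^ j := by
    rw [← ContinuousLinearMap.star_eq_adjoint, ← ContinuousLinearMap.star_eq_adjoint, star_pow]
  have heq : ((J ^ j) * R * (ContinuousLinearMap.adjoint J) ^ j) x
      = (J ^ j) (S (S (((ContinuousLinearMap.adjoint J) ^ j) x))) := by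
    simp [ContinuousLinearMap.mul_apply, ← hS2]
  rw [heq]
  set y := ((ContinuousLinearMap.adjoint J) ^ j) x with hy
  have h1 : ⟪(J ^ j) (S (S y)), x⟫_ℂ
      = ⟪S (S y), (ContinuousLinearMap.adjoint (J ^ j)) x⟫_ℂ :=
    (ContinuousLinearMap.adjoint_inner_right (J ^ j) (S (S y)) x).symm
  rw [h1, hpow, ← hy]
  have h2 : ⟪S (S y), y⟫_ℂ = ⟪S y, S y⟫_ℂ := by
    conv_rhs => rw [← ContinuousLinearMap.adjoint_inner_left, hSsa]
  rw [h2, re_inner_self]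

/-- `∑_{j=0}^m J^j R (J*)^j ≥ κ I` for some `κ > 0` iff the algebraic span of the
ranges of `J^j ∘ √R`, `j = 0, …, m`, is all of `H`. -/
theorem coercive_iff_span_ranges_eq_top
    {H : Type*} [NormedAddCommGroup H] [InnerProductSpace ℂ H]
    [CompleteSpace H] [TopologicalSpace.SeparableSpace H]
    (J R S : H →L[ℂ] H)
    (hJ : ContinuousLinearMap.adjoint J = -J)
    (hR : R.IsPositive)
    (hS : S.IsPositive) (hS2 : S * S = R)
    (m : ℕ) :
    (∃ κ : ℝ, 0 < κ ∧ ∀ x : H,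
        κ * ‖x‖ ^ 2 ≤ (⟪(∑ j ∈ Finset.range (m + 1),
          (J ^ j) * R * (ContinuousLinearMap.adjoint J) ^ j) x, x⟫_ℂ).re) ↔
    Submodule.span ℂ (⋃ j ∈ Finset.range (m + 1),
        Set.range ⇑((J ^ j) ∘L S)) = ⊤ := by
  set J' := ContinuousLinearMap.adjoint J with hJ'
  set T : H →L[ℂ] H := ∑ j ∈ Finset.range (m + 1), (J ^ j) * R * J' ^ j with hT
  have key : ∀ x : H, (⟪T x, x⟫_ℂ).re
      = ∑ j ∈ Finset.range (m + 1), ‖S ((J' ^ j) x)‖ ^ 2 :=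
    key_quadform J R S hS hS2 m
  have hTmem : ∀ x : H, T x ∈ Submodule.span ℂ (⋃ j ∈ Finset.range (m + 1),
      Set.range ⇑((J ^ j) ∘L S)) := by
    intro x
    rw [hT, ContinuousLinearMap.sum_apply]
    refine Submodule.sum_mem _ fun j hj => ?_
    apply Submodule.subset_span
    refine Set.mem_biUnion hj ?_
    exact ⟨S ((J' ^ j) x), by simp [ContinuousLinearMap.mul_apply, ← hS2]⟩
  constructor
  · rintro ⟨κ, hκ, hc⟩
    have hbb : ∀ x : H, κ * ‖x‖ ≤ ‖T x‖ := by
      intro x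
      rcases eq_or_ne x 0 with rfl | hx
      · simp
      have hx' : 0 < ‖x‖ := norm_pos_iff.mpr hx
      have h1 : κ * ‖x‖ ^ 2 ≤ ‖T x‖ * ‖x‖ := by
        calc κ * ‖x‖ ^ 2 ≤ (⟪T x, x⟫_ℂ).re := hc x
        _ ≤ ‖⟪T x, x⟫_ℂ‖ := Complex.re_le_norm _
        _ ≤ ‖T x‖ * ‖x‖ := norm_inner_le_norm _ _
      nlinarith
    have hanti : AntilipschitzWith (κ⁻¹).toNNReal ⇑T := by
      refine AntilipschitzWith.of_le_mul_dist fun x y => ?_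
      rw [dist_eq_norm, dist_eq_norm, ← map_sub]
      have h := hbb (x - y)
      rw [Real.coe_toNNReal _ (by positivity)]
      rw [← le_div_iff₀' hκ] at h
      simpa [div_eq_inv_mul] using h
    have hclosed : IsClosed ((LinearMap.range (T : H →ₗ[ℂ] H) : Submodule ℂ H) : Set H) := by
      have := hanti.isClosed_range T.uniformContinuous
      rw [LinearMap.coe_range]; exact this
    have hdense : (LinearMap.range (T : H →ₗ[ℂ] H) : Submodule ℂ H).topologicalClosure = ⊤ := by
      rw [Submodule.topologicalClosure_eq_top_iff]
      rw [Submodule.eq_bot_iff]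
      intro x hx
      have h0 : ⟪T x, x⟫_ℂ = 0 := (Submodule.mem_orthogonal _ x).mp hx (T x) ⟨x, rfl⟩
      have h := hc x
      rw [h0] at h
      simp only [Complex.zero_re] at h
      have h2 : ‖x‖ ^ 2 ≤ 0 := by nlinarith
      have h3 : ‖x‖ = 0 := by nlinarith [sq_nonneg ‖x‖, norm_nonneg x]
      simpa using h3
    have hsurj : LinearMap.range (T : H →ₗ[ℂ] H) = ⊤ := by
      rw [← hdense, hclosed.submodule_topologicalClosure_eq]
    rw [eq_top_iff]
    intro x _
    obtain ⟨z, hz⟩ : ∃ z, T z = x := LinearMap.range_eq_top.mp hsurj x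
    exact hz ▸ hTmem z
  · intro hspan
    set B : (Fin (m + 1) → H) →L[ℂ] H :=
      ∑ j : Fin (m + 1), ((J ^ (j : ℕ)) ∘L S) ∘L ContinuousLinearMap.proj j with hB
    have hBsurj : Function.Surjective ⇑B := by
      refine (LinearMap.range_eq_top (f := (B : (Fin (m + 1) → H) →ₗ[ℂ] H))).mp ?_
      rw [eq_top_iff, ← hspan]
      rw [Submodule.span_le]
      intro y hy
      simp only [Set.mem_iUnion] at hy
      obtain ⟨j, hj, w, hw⟩ := hy
      have hjlt : j < m + 1 := Finset.mem_range.mp hj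
      set jf : Fin (m + 1) := ⟨j, hjlt⟩ with hjf
      refine ⟨(Pi.single jf w : Fin (m + 1) → H), ?_⟩
      change B _ = y
      rw [hB, ContinuousLinearMap.sum_apply]
      have hterm : ∀ i : Fin (m + 1),
          (((J ^ (i : ℕ)) ∘L S) ∘L ContinuousLinearMap.proj i) ((Pi.single jf w : Fin (m + 1) → H))
          = if i = jf then ((J ^ j) ∘L S) w else 0 := by
        intro i
        by_cases hij : i = jf
        · subst hij; simp [hjf]
        · simp [Pi.single_eq_of_ne hij, hij]
      rw [Finset.sum_congr rfl fun i _ => hterm i]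
      simpa using hw
    obtain ⟨C, hC, hCx⟩ := B.exists_preimage_norm_le hBsurj
    refine ⟨(C ^ 2 * (m + 1))⁻¹, by positivity, fun y => ?_⟩
    rw [key y]
    obtain ⟨x, hx, hxn⟩ := hCx y
    have hterm : ∀ j : Fin (m + 1),
        (⟪(((J ^ (j : ℕ)) ∘L S) ∘L ContinuousLinearMap.proj j) x, y⟫_ℂ).re
          ≤ ‖x‖ * ‖S ((J' ^ (j : ℕ)) y)‖ := by
      intro j
      have hadj : ContinuousLinearMap.adjoint ((J ^ (j : ℕ)) ∘L S) = S ∘L J' ^ (j : ℕ) := by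
        rw [ContinuousLinearMap.adjoint_comp, hS.isSelfAdjoint.adjoint_eq]
        congr 1
        rw [← ContinuousLinearMap.star_eq_adjoint, star_pow, ContinuousLinearMap.star_eq_adjoint]
      have h1 : ⟪(((J ^ (j : ℕ)) ∘L S) ∘L ContinuousLinearMap.proj j) x, y⟫_ℂ
          = ⟪x j, S ((J' ^ (j : ℕ)) y)⟫_ℂ := by
        have h2 := (ContinuousLinearMap.adjoint_inner_right ((J ^ (j : ℕ)) ∘L S) (x j) y).symm
        rw [hadj] at h2
        exact h2
      rw [h1]
      calc (⟪x j, S ((J' ^ (j : ℕ)) y)⟫_ℂ).re ≤ ‖⟪x j, S ((J' ^ (j : ℕ)) y)⟫_ℂ‖ :=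
            Complex.re_le_norm _
        _ ≤ ‖x j‖ * ‖S ((J' ^ (j : ℕ)) y)‖ := norm_inner_le_norm _ _
        _ ≤ ‖x‖ * ‖S ((J' ^ (j : ℕ)) y)‖ := by
            gcongr; exact norm_le_pi_norm x j
    have hsum1 : ‖y‖ ^ 2 ≤ ‖x‖ * ∑ j : Fin (m + 1), ‖S ((J' ^ (j : ℕ)) y)‖ := by
      have h0 : (‖y‖ : ℝ) ^ 2 = (⟪B x, y⟫_ℂ).re := by
        rw [hx, re_inner_self]
      rw [h0, hB, ContinuousLinearMap.sum_apply, sum_inner, Complex.re_sum,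
        Finset.mul_sum]
      exact Finset.sum_le_sum fun j _ => hterm j
    set s : ℝ := ∑ j : Fin (m + 1), ‖S ((J' ^ (j : ℕ)) y)‖ with hs
    have hs0 : 0 ≤ s := Finset.sum_nonneg fun j _ => norm_nonneg _
    have hcs : s ^ 2 ≤ (m + 1) * ∑ j : Fin (m + 1), ‖S ((J' ^ (j : ℕ)) y)‖ ^ 2 := by
      have := sq_sum_le_card_mul_sum_sq (s := (Finset.univ : Finset (Fin (m + 1))))
        (f := fun j : Fin (m + 1) => ‖S ((J' ^ (j : ℕ)) y)‖)
      simpa [hs] using this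
    have hsumeq : ∑ j : Fin (m + 1), ‖S ((J' ^ (j : ℕ)) y)‖ ^ 2
        = ∑ j ∈ Finset.range (m + 1), ‖S ((J' ^ j) y)‖ ^ 2 := by
      rw [Finset.sum_range fun j => ‖S ((J' ^ j) y)‖ ^ 2]
    rw [← hsumeq]
    set Q : ℝ := ∑ j : Fin (m + 1), ‖S ((J' ^ (j : ℕ)) y)‖ ^ 2 with hQ
    have hQ0 : 0 ≤ Q := Finset.sum_nonneg fun j _ => sq_nonneg _
    rcases eq_or_ne y 0 with rfl | hy0
    · simpa using hQ0
    have hy' : 0 < ‖y‖ := norm_pos_iff.mpr hy0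
    have hxy : ‖y‖ ^ 2 ≤ C * ‖y‖ * s := by
      calc ‖y‖ ^ 2 ≤ ‖x‖ * s := hsum1
      _ ≤ (C * ‖y‖) * s := by gcongr
    rw [inv_mul_le_iff₀ (by positivity)]
    have h4 : ‖y‖ ^ 2 * ‖y‖ ^ 2 ≤ (C * ‖y‖ * s) * (C * ‖y‖ * s) :=
      mul_le_mul hxy hxy (by positivity) (by positivity)
    have h5 : (C ^ 2 * ‖y‖ ^ 2) * s ^ 2 ≤ (C ^ 2 * ‖y‖ ^ 2) * ((↑m + 1) * Q) :=
      mul_le_mul_of_nonneg_left hcs (by positivity)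
    have h6 : ‖y‖ ^ 2 * ‖y‖ ^ 2 ≤ ‖y‖ ^ 2 * (C ^ 2 * (↑m + 1) * Q) := by
      calc ‖y‖ ^ 2 * ‖y‖ ^ 2 ≤ (C * ‖y‖ * s) * (C * ‖y‖ * s) := h4
        _ = (C ^ 2 * ‖y‖ ^ 2) * s ^ 2 := by ring
        _ ≤ (C ^ 2 * ‖y‖ ^ 2) * ((↑m + 1) * Q) := h5
        _ = ‖y‖ ^ 2 * (C ^ 2 * (↑m + 1) * Q) := by ring
    exact le_of_mul_le_mul_left h6 (by positivity)
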